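/- Let A be a real m×n matrix, x, p ∈ ℝⁿ with ⟪x - p, p⟫ = 0, and b = A·x. Let W be the subspace of ℝⁿ spanned by p together with the rows of A, and let q be the orthogonal projection of x onto W. Then ‖p‖ ≤ ‖q‖, and if A·p ≠ b then ‖p‖ < ‖q‖ strictly. -/

import Mathlib

open scoped RealInnerProductSpace
open Matrix

/-- if `⟪x - p, p⟫ = 0` and `q` is the orthogonal projection of
`x` onto `W = span{p} ⊔ ran(Aᵀ)`, then `‖p‖ ≤ ‖q‖`, with strict inequality
whenever `A p ≠ b`. -/
theorem ap_norm_increases {m n : ℕ}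
    (A : Matrix (Fin m) (Fin n) ℝ)
    (x p : EuclideanSpace ℝ (Fin n)) (horth : ⟪x - p, p⟫ = 0)
    (b : EuclideanSpace ℝ (Fin m)) (hb : b = A.mulVec x)
    (W : Submodule ℝ (EuclideanSpace ℝ (Fin n)))
    (hW : W = Submodule.span ℝ {p} ⊔
        Submodule.span ℝ (Set.range fun i : Fin m => (WithLp.toLp 2 (A i) : EuclideanSpace ℝ (Fin n))))
    (q : EuclideanSpace ℝ (Fin n))
    (hqmem : q ∈ W) (hqorth : ∀ w ∈ W, ⟪x - q, w⟫ = 0) :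
    ‖p‖ ≤ ‖q‖ ∧ ((WithLp.toLp 2 (A.mulVec p) : EuclideanSpace ℝ (Fin m)) ≠ b → ‖p‖ < ‖q‖) := by
  have hpW : p ∈ W := by
    rw [hW]
    exact Submodule.mem_sup_left (Submodule.mem_span_singleton_self p)
  have h1 : ⟪x - q, p⟫ = 0 := hqorth p hpW
  have hqp : ⟪q - p, p⟫ = 0 := by
    rw [inner_sub_left] at horth h1 ⊢
    linarith
  have hpyth : ‖q‖ ^ 2 = ‖q - p‖ ^ 2 + ‖p‖ ^ 2 := by
    have h := norm_add_sq_real (q - p) p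
    rw [sub_add_cancel] at h
    rw [h, hqp]; ring
  have hle : ‖p‖ ≤ ‖q‖ := by
    nlinarith [norm_nonneg p, norm_nonneg q, norm_nonneg (q - p), sq_nonneg (‖q - p‖)]
  refine ⟨hle, fun hne => ?_⟩
  have hqnep : q ≠ p := by
    intro hqe
    apply hne
    rw [← WithLp.toLp_ofLp (x := b), hb]
    congr 1
    funext i
    have hrow : (WithLp.toLp 2 (A i) : EuclideanSpace ℝ (Fin n)) ∈ W := by
      rw [hW]
      exact Submodule.mem_sup_right (Submodule.subset_span ⟨i, rfl⟩)
    have h2 : ⟪x - q, (WithLp.toLp 2 (A i) : EuclideanSpace ℝ (Fin n))⟫ = 0 := hqorth _ hrow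
    rw [hqe] at h2
    have : ∑ j, (x j - p j) * A i j = 0 := by
      simpa [PiLp.inner_apply, mul_comm] using h2
    simp only [Matrix.mulVec, dotProduct]
    have : ∑ j, A i j * x j - ∑ j, A i j * p j = 0 := by
      rw [← Finset.sum_sub_distrib]
      rw [← this]
      congr 1
      ext j
      ring
    linarith
  have hqpnorm : 0 < ‖q - p‖ := by
    rw [norm_pos_iff]
    exact sub_ne_zero_of_ne hqnep
  nlinarith [norm_nonneg p, norm_nonneg q]
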